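/- Under the stated assumptions, for every unit vector x ∈ ℝ³ satisfying x·f_i < ε_i for all i ∈ {0, 1, …, m} (i.e., x in the eroded free space), the artificial potential U(x) is nonnegative, and U(x) = 0 if and only if x = x*; that is, x = x* is the unique global minimum of U on the eroded free space. -/
import Mathlib


open scoped RealInnerProductSpace

/-- The repulsive potential function `φ` with parameters `a = ε*` and `b = ε`. -/
noncomputable def phi (a b : ℝ) (z : ℝ) : ℝ :=
  if a ≤ z then (z - a) ^ 2 * Real.log ((b - a) / (b - z)) else 0

/-- The artificial potential
`U(x) = k_a (1 − x·x*) + k_r Σ_{i=0}^m φ_i(x·f_i)`. -/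
noncomputable def Upot {m : ℕ} (ka kr : ℝ)
    (xstar : EuclideanSpace ℝ (Fin 3)) (f : Fin (m + 1) → EuclideanSpace ℝ (Fin 3))
    (es eb : Fin (m + 1) → ℝ) (x : EuclideanSpace ℝ (Fin 3)) : ℝ :=
  ka * (1 - ⟪x, xstar⟫) + kr * ∑ i, phi (es i) (eb i) ⟪x, f i⟫

lemma phi_nonneg {a b z : ℝ} (hab : a < b) (hz : z < b) : 0 ≤ phi a b z := by
  unfold phi
  split_ifs with h
  · apply mul_nonneg (sq_nonneg _)
    apply Real.log_nonneg
    rw [le_div_iff₀ (by linarith)]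
    linarith
  · exact le_refl 0

lemma phi_eq_zero {a b z : ℝ} (hz : z ≤ a) : phi a b z = 0 := by
  unfold phi
  split_ifs with h
  · have : z = a := le_antisymm hz h
    simp [this]
  · rfl

/-- on the eroded free space the artificial potential `U` is
nonnegative and vanishes exactly at the goal `x*`; i.e. `x = x*` is the unique
global minimum of `U` there. -/
theorem potential_unique_global_minimum
    (m : ℕ) (hm : 1 ≤ m) (ka kr : ℝ) (hka : 0 < ka) (hkr : 0 < kr)
    (xstar : EuclideanSpace ℝ (Fin 3)) (f : Fin (m + 1) → EuclideanSpace ℝ (Fin 3))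
    (hxstar : ‖xstar‖ = 1) (hf : ∀ i, ‖f i‖ = 1) (hf0 : f 0 = -xstar)
    (es eb : Fin (m + 1) → ℝ) (heseb : ∀ i, es i < eb i) (heb : ∀ i, eb i < 1)
    (hgoal : ∀ i, ⟪xstar, f i⟫ ≤ es i) :
    ∀ x : EuclideanSpace ℝ (Fin 3), ‖x‖ = 1 → (∀ i, ⟪x, f i⟫ < eb i) →
      0 ≤ Upot ka kr xstar f es eb x ∧
        (Upot ka kr xstar f es eb x = 0 ↔ x = xstar) := by
  intro x hx hfree
  have hsum : 0 ≤ ∑ i, phi (es i) (eb i) ⟪x, f i⟫ :=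
    Finset.sum_nonneg fun i _ => phi_nonneg (heseb i) (hfree i)
  have hip : ⟪x, xstar⟫ ≤ 1 := by
    have := real_inner_le_norm x xstar
    rw [hx, hxstar] at this; linarith
  have h1 : 0 ≤ ka * (1 - ⟪x, xstar⟫) := mul_nonneg hka.le (by linarith)
  have h2 : 0 ≤ kr * ∑ i, phi (es i) (eb i) ⟪x, f i⟫ := mul_nonneg hkr.le hsum
  refine ⟨add_nonneg h1 h2, ?_, ?_⟩
  · intro h
    have hz1 : ka * (1 - ⟪x, xstar⟫) = 0 := by
      unfold Upot at h; linarith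
    have : ⟪x, xstar⟫ = (1 : ℝ) := by
      have := mul_eq_zero.1 hz1
      rcases this with h' | h'
      · exact absurd h' hka.ne'
      · linarith
    exact (inner_eq_one_iff_of_norm_eq_one hx hxstar).1 this
  · intro h
    subst h
    have hip1 : ⟪x, x⟫ = (1 : ℝ) := by
      rw [real_inner_self_eq_norm_sq, hx]; norm_num
    unfold Upot
    rw [hip1]
    have : ∑ i, phi (es i) (eb i) ⟪x, f i⟫ = 0 :=
      Finset.sum_eq_zero fun i _ => phi_eq_zero (hgoal i)
    rw [this]; ring
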